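/- Let π and π̃ := (1−α)π + α·Unif(A) be two policy sequences (mixed with the uniform policy with weight α ∈ (0,1/2)), and p̂, p̂' two kernel sequences. Then for all n, ‖μ_n^{π,p̂} − μ_n^{π̃,p̂'}‖₁ ≤ Σ_{i=0}^{n-1} Σ_{x,a} μ_i^{π,p̂}(x,a) ‖p̂_{i+1}(·|x,a) − p̂'_{i+1}(·|x,a)‖₁ + 2nα. -/

import Mathlib

open Finset

noncomputable section

variable {X A : Type*} [Fintype X] [Fintype A] [Nonempty A]

def IsDist {Y : Type*} [Fintype Y] (η : Y → ℝ) : Prop :=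
  (∀ y, 0 ≤ η y) ∧ ∑ y, η y = 1

/-- Occupancy measures: `occ μ0 p π n` is the state-action distribution `μ_n^{π,p}`. -/
def occ (μ0 : X × A → ℝ) (p : ℕ → X → A → X → ℝ) (π : ℕ → X → A → ℝ) :
    ℕ → X × A → ℝ
  | 0 => μ0
  | n + 1 => fun y =>
      (∑ x, ∑ a, occ μ0 p π n (x, a) * p (n + 1) x a y.1) * π (n + 1) y.1 y.2

set_option linter.unusedSectionVars false in
lemma occ_isDist (μ0 : X × A → ℝ) (hμ0 : IsDist μ0)
    (p : ℕ → X → A → X → ℝ) (hp : ∀ n x a, IsDist (p n x a))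
    (π : ℕ → X → A → ℝ) (hπ : ∀ n x, IsDist (π n x)) :
    ∀ n, IsDist (occ μ0 p π n)
  | 0 => hμ0
  | n + 1 => by
    have ih := occ_isDist μ0 hμ0 p hp π hπ n
    constructor
    · rintro ⟨x', a'⟩
      refine mul_nonneg ?_ ((hπ _ _).1 _)
      exact Finset.sum_nonneg fun x _ => Finset.sum_nonneg fun a _ =>
        mul_nonneg (ih.1 _) ((hp _ _ _).1 _)
    · rw [Fintype.sum_prod_type]
      simp only [occ]
      have h1 : ∀ x' : X,
          ∑ a', (∑ x, ∑ a, occ μ0 p π n (x, a) * p (n + 1) x a x') * π (n + 1) x' a'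
          = ∑ x, ∑ a, occ μ0 p π n (x, a) * p (n + 1) x a x' := by
        intro x'
        rw [← Finset.mul_sum, (hπ (n + 1) x').2, mul_one]
      rw [Finset.sum_congr rfl fun x' _ => h1 x']
      rw [Finset.sum_comm]
      have h2 : ∀ x : X, ∑ x', ∑ a, occ μ0 p π n (x, a) * p (n + 1) x a x'
          = ∑ a, occ μ0 p π n (x, a) := by
        intro x
        rw [Finset.sum_comm]
        exact Finset.sum_congr rfl fun a _ => by
          rw [← Finset.mul_sum, (hp (n + 1) x a).2, mul_one]
      rw [Finset.sum_congr rfl fun x _ => h2 x, ← Fintype.sum_prod_type]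
      exact ih.2


/-- Bound on the L1 distance between occupancies of `π` under `p̂` and of the uniform-mixed
policy `π̃ = (1−α)π + α·Unif(A)` under `p̂'`. -/
theorem occ_mixed_policy_bound (N : ℕ) (α : ℝ) (hα0 : 0 < α) (hα : α < 1 / 2)
    (μ0 : X × A → ℝ) (hμ0 : IsDist μ0)
    (p q : ℕ → X → A → X → ℝ)
    (hp : ∀ n x a, IsDist (p n x a)) (hq : ∀ n x a, IsDist (q n x a))
    (π : ℕ → X → A → ℝ) (hπ : ∀ n x, IsDist (π n x))
    (n : ℕ) (hn : n ≤ N) :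
    -- `π̃` is `π` mixed with the uniform policy with weight `α`
    let πt : ℕ → X → A → ℝ := fun m x a =>
      (1 - α) * π m x a + α / (Fintype.card A : ℝ)
    ∑ y : X × A, |occ μ0 p π n y - occ μ0 q πt n y| ≤
      (∑ i ∈ range n, ∑ x, ∑ a,
          occ μ0 p π i (x, a) * ∑ x', |p (i + 1) x a x' - q (i + 1) x a x'|) +
        2 * n * α := by
  intro πt
  clear hn
  have hc : (0 : ℝ) < (Fintype.card A : ℝ) := by
    exact_mod_cast Fintype.card_pos
  have hπt : ∀ m x, IsDist (πt m x) := by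
    intro m x
    constructor
    · intro a
      have h1 := (hπ m x).1 a
      have : (0:ℝ) ≤ (1 - α) * π m x a := by nlinarith
      have : (0:ℝ) ≤ α / (Fintype.card A : ℝ) := by positivity
      show (0:ℝ) ≤ (1 - α) * π m x a + α / (Fintype.card A : ℝ)
      linarith
    · show ∑ a, ((1 - α) * π m x a + α / (Fintype.card A : ℝ)) = 1
      rw [Finset.sum_add_distrib, ← Finset.mul_sum, (hπ m x).2, Finset.sum_const,
        Finset.card_univ, nsmul_eq_mul]
      field_simp
      ring
  induction n with
  | zero => simp [occ]
  | succ n ih =>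
    -- notation
    set μp := occ μ0 p π with hμp
    set μq := occ μ0 q πt with hμq
    have hdp := occ_isDist μ0 hμ0 p hp π hπ n
    have hdq := occ_isDist μ0 hμ0 q hq πt hπt n
    set F : X → ℝ := fun x' => ∑ x, ∑ a, μp n (x, a) * p (n + 1) x a x' with hF
    set G : X → ℝ := fun x' => ∑ x, ∑ a, μq n (x, a) * q (n + 1) x a x' with hG
    have hGnn : ∀ x', 0 ≤ G x' := fun x' =>
      Finset.sum_nonneg fun x _ => Finset.sum_nonneg fun a _ =>
        mul_nonneg (hdq.1 _) ((hq _ _ _).1 _)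
    have hGsum : ∑ x', G x' = 1 := by
      have h2 : ∑ x', G x' = ∑ x, ∑ a, μq n (x, a) := by
        rw [Finset.sum_comm]
        refine Finset.sum_congr rfl fun x _ => ?_
        rw [Finset.sum_comm]
        refine Finset.sum_congr rfl fun a _ => ?_
        rw [← Finset.mul_sum, (hq (n + 1) x a).2, mul_one]
      rw [h2, ← Fintype.sum_prod_type]
      exact hdq.2
    -- mixing bound on the policies
    have hmix : ∀ x', ∑ a', |π (n + 1) x' a' - πt (n + 1) x' a'| ≤ 2 * α := by
      intro x'
      have h1 : ∀ a' : A, |π (n + 1) x' a' - πt (n + 1) x' a'| ≤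
          α * (π (n + 1) x' a' + 1 / (Fintype.card A : ℝ)) := by
        intro a'
        have he : π (n + 1) x' a' - πt (n + 1) x' a' =
            α * (π (n + 1) x' a' - 1 / (Fintype.card A : ℝ)) := by
          show π (n + 1) x' a' -
              ((1 - α) * π (n + 1) x' a' + α / (Fintype.card A : ℝ)) = _
          field_simp
          ring
        rw [he, abs_mul, abs_of_pos hα0]
        have hπnn := (hπ (n + 1) x').1 a'
        have hcinv : (0:ℝ) ≤ 1 / (Fintype.card A : ℝ) := by positivity
        have : |π (n + 1) x' a' - 1 / (Fintype.card A : ℝ)| ≤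
            π (n + 1) x' a' + 1 / (Fintype.card A : ℝ) := by
          rw [abs_le]; constructor <;> linarith
        nlinarith
      calc ∑ a', |π (n + 1) x' a' - πt (n + 1) x' a'|
          ≤ ∑ a', α * (π (n + 1) x' a' + 1 / (Fintype.card A : ℝ)) :=
            Finset.sum_le_sum fun a' _ => h1 a'
        _ = 2 * α := by
            rw [← Finset.mul_sum, Finset.sum_add_distrib, (hπ (n + 1) x').2,
              Finset.sum_const, Finset.card_univ, nsmul_eq_mul]
            field_simp
            ring
    -- key pointwise inequality
    have key : ∀ (a b c d : ℝ), 0 ≤ a → 0 ≤ d →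
        |a * b - c * d| ≤ a * |b - d| + |a - c| * d := by
      intro a b c d ha hd
      have he : a * b - c * d = a * (b - d) + (a - c) * d := by ring
      rw [he]
      refine (abs_add_le _ _).trans ?_
      rw [abs_mul, abs_mul, abs_of_nonneg ha, abs_of_nonneg hd]
    -- bound on ∑ |F - G|
    have hFG : ∑ x', |F x' - G x'| ≤
        (∑ x, ∑ a, μp n (x, a) * ∑ x', |p (n + 1) x a x' - q (n + 1) x a x'|) +
          ∑ y : X × A, |μp n y - μq n y| := by
      have step1 : ∀ x', |F x' - G x'| ≤
          ∑ x, ∑ a, (μp n (x, a) * |p (n + 1) x a x' - q (n + 1) x a x'| +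
            |μp n (x, a) - μq n (x, a)| * q (n + 1) x a x') := by
        intro x'
        have he : F x' - G x' =
            ∑ x, ∑ a, (μp n (x, a) * p (n + 1) x a x' - μq n (x, a) * q (n + 1) x a x') := by
          simp [hF, hG, Finset.sum_sub_distrib]
        rw [he]
        refine (Finset.abs_sum_le_sum_abs _ _).trans ?_
        refine Finset.sum_le_sum fun x _ => ?_
        refine (Finset.abs_sum_le_sum_abs _ _).trans ?_
        refine Finset.sum_le_sum fun a _ => ?_
        exact key _ _ _ _ (hdp.1 _) ((hq _ _ _).1 _)
      calc ∑ x', |F x' - G x'|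
          ≤ ∑ x', ∑ x, ∑ a, (μp n (x, a) * |p (n + 1) x a x' - q (n + 1) x a x'| +
              |μp n (x, a) - μq n (x, a)| * q (n + 1) x a x') :=
            Finset.sum_le_sum fun x' _ => step1 x'
        _ = (∑ x, ∑ a, μp n (x, a) * ∑ x', |p (n + 1) x a x' - q (n + 1) x a x'|) +
              ∑ y : X × A, |μp n y - μq n y| := by
            rw [Finset.sum_comm]
            have h3 : ∀ x : X, (∑ x', ∑ a, (μp n (x, a) * |p (n + 1) x a x' - q (n + 1) x a x'| +
                |μp n (x, a) - μq n (x, a)| * q (n + 1) x a x'))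
                = ∑ a, (μp n (x, a) * ∑ x', |p (n + 1) x a x' - q (n + 1) x a x'| +
                    |μp n (x, a) - μq n (x, a)|) := by
              intro x
              rw [Finset.sum_comm]
              refine Finset.sum_congr rfl fun a _ => ?_
              rw [Finset.sum_add_distrib, ← Finset.mul_sum, ← Finset.mul_sum,
                (hq (n + 1) x a).2, mul_one]
            rw [Finset.sum_congr rfl fun x _ => h3 x]
            simp [Fintype.sum_prod_type, Finset.sum_add_distrib]
    -- main calc
    have hocc_p : ∀ y : X × A, occ μ0 p π (n + 1) y = F y.1 * π (n + 1) y.1 y.2 := fun y => rfl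
    have hocc_q : ∀ y : X × A, occ μ0 q πt (n + 1) y = G y.1 * πt (n + 1) y.1 y.2 := fun y => rfl
    calc ∑ y : X × A, |occ μ0 p π (n + 1) y - occ μ0 q πt (n + 1) y|
        = ∑ x', ∑ a', |F x' * π (n + 1) x' a' - G x' * πt (n + 1) x' a'| := by
          rw [Fintype.sum_prod_type]
          rfl
      _ ≤ ∑ x', ∑ a', (|F x' - G x'| * π (n + 1) x' a' +
            G x' * |π (n + 1) x' a' - πt (n + 1) x' a'|) := by
          refine Finset.sum_le_sum fun x' _ => Finset.sum_le_sum fun a' _ => ?_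
          have he : F x' * π (n + 1) x' a' - G x' * πt (n + 1) x' a' =
              (F x' - G x') * π (n + 1) x' a' +
                G x' * (π (n + 1) x' a' - πt (n + 1) x' a') := by ring
          rw [he]
          refine (abs_add_le _ _).trans ?_
          rw [abs_mul, abs_mul, abs_of_nonneg ((hπ _ _).1 _), abs_of_nonneg (hGnn x')]
      _ = ∑ x', (|F x' - G x'| + G x' * ∑ a', |π (n + 1) x' a' - πt (n + 1) x' a'|) := by
          refine Finset.sum_congr rfl fun x' _ => ?_
          rw [Finset.sum_add_distrib, ← Finset.mul_sum, ← Finset.mul_sum,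
            (hπ (n + 1) x').2, mul_one]
      _ ≤ ∑ x', (|F x' - G x'| + G x' * (2 * α)) := by
          refine Finset.sum_le_sum fun x' _ => ?_
          exact add_le_add_right (mul_le_mul_of_nonneg_left (hmix x') (hGnn x')) _
      _ = (∑ x', |F x' - G x'|) + 2 * α := by
          rw [Finset.sum_add_distrib, ← Finset.sum_mul, hGsum, one_mul]
      _ ≤ ((∑ x, ∑ a, μp n (x, a) * ∑ x', |p (n + 1) x a x' - q (n + 1) x a x'|) +
            ∑ y : X × A, |μp n y - μq n y|) + 2 * α := by
          exact add_le_add_left hFG _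
      _ ≤ ((∑ x, ∑ a, μp n (x, a) * ∑ x', |p (n + 1) x a x' - q (n + 1) x a x'|) +
            ((∑ i ∈ range n, ∑ x, ∑ a,
              μp i (x, a) * ∑ x', |p (i + 1) x a x' - q (i + 1) x a x'|) + 2 * n * α)) +
              2 * α := by
          refine add_le_add_left (add_le_add_right ih _) _
      _ = (∑ i ∈ range (n + 1), ∑ x, ∑ a,
            μp i (x, a) * ∑ x', |p (i + 1) x a x' - q (i + 1) x a x'|) +
          2 * (n + 1 : ℕ) * α := by
          rw [Finset.sum_range_succ]
          push_cast
          ring
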